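/- For any even integer s, any integer t, and non-negative integer n: sum_{k=0}^n binom(n,k) * (-1)^k * L_s^(n-k) * F_{s(n+k+2)+t} / (k+1) = (L_s^(n+1) * F_{s(n+1)+t} - F_t) / (n+1), and the same identity holds with the inner F replaced by L and the right-hand side F's replaced by L's. -/

import Mathlib

open Finset

/-- Lucas numbers on naturals. -/
def lucasNat : ℕ → ℤ
  | 0 => 2
  | 1 => 1
  | n + 2 => lucasNat (n + 1) + lucasNat n

/-- Fibonacci numbers extended to integer indices: `F_{-m} = (-1)^(m-1) F_m`. -/
def fibZ (n : ℤ) : ℤ :=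
  if 0 ≤ n then (Nat.fib n.toNat : ℤ) else (-1) ^ ((-n).toNat + 1) * (Nat.fib (-n).toNat : ℤ)

/-- Lucas numbers extended to integer indices: `L_{-m} = (-1)^m L_m`. -/
def lucasZ (n : ℤ) : ℤ :=
  if 0 ≤ n then lucasNat n.toNat else (-1) ^ (-n).toNat * lucasNat (-n).toNat

lemma fibZ_ofNat (n : ℕ) : fibZ (n : ℤ) = Nat.fib n := by
  simp [fibZ]

lemma fibZ_neg_ofNat (n : ℕ) : fibZ (-(n : ℤ)) = (-1) ^ (n + 1) * Nat.fib n := by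
  rcases Nat.eq_zero_or_pos n with h | h
  · subst h; simp [fibZ]
  · rw [fibZ, if_neg (by omega)]
    simp

lemma lucasZ_ofNat (n : ℕ) : lucasZ (n : ℤ) = lucasNat n := by
  simp [lucasZ]

lemma lucasZ_neg_ofNat (n : ℕ) : lucasZ (-(n : ℤ)) = (-1) ^ n * lucasNat n := by
  rcases Nat.eq_zero_or_pos n with h | h
  · subst h; simp [lucasZ]
  · rw [lucasZ, if_neg (by omega)]
    simp

lemma fibZ_rec (k : ℤ) : fibZ (k + 2) = fibZ (k + 1) + fibZ k := by
  rcases le_or_gt 0 k with h | h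
  · obtain ⟨n, rfl⟩ := Int.eq_ofNat_of_zero_le h
    have h1 : ((n : ℤ) + 1) = ((n + 1 : ℕ) : ℤ) := by push_cast; ring
    have h2 : ((n : ℤ) + 2) = ((n + 2 : ℕ) : ℤ) := by push_cast; ring
    rw [h1, h2, fibZ_ofNat, fibZ_ofNat, fibZ_ofNat, Nat.fib_add_two]
    push_cast; ring
  · obtain ⟨m, rfl⟩ : ∃ m : ℕ, k = -(m : ℤ) - 1 := ⟨(-k - 1).toNat, by omega⟩
    rcases Nat.eq_zero_or_pos m with h0 | h0
    · subst h0; norm_num [fibZ]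
    · obtain ⟨p, rfl⟩ : ∃ p : ℕ, m = p + 1 := ⟨m - 1, by omega⟩
      rw [show (-(((p+1:ℕ)):ℤ) - 1 + 2) = -((p:ℕ):ℤ) by push_cast; ring,
        show (-(((p+1:ℕ)):ℤ) - 1 + 1) = -(((p+1:ℕ)):ℤ) by push_cast; ring,
        show (-(((p+1:ℕ)):ℤ) - 1) = -(((p+2:ℕ)):ℤ) by push_cast; ring,
        fibZ_neg_ofNat, fibZ_neg_ofNat, fibZ_neg_ofNat, Nat.fib_add_two]
      push_cast; ring

lemma lucasZ_rec (k : ℤ) : lucasZ (k + 2) = lucasZ (k + 1) + lucasZ k := by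
  rcases le_or_gt 0 k with h | h
  · obtain ⟨n, rfl⟩ := Int.eq_ofNat_of_zero_le h
    have h1 : ((n : ℤ) + 1) = ((n + 1 : ℕ) : ℤ) := by push_cast; ring
    have h2 : ((n : ℤ) + 2) = ((n + 2 : ℕ) : ℤ) := by push_cast; ring
    rw [h1, h2, lucasZ_ofNat, lucasZ_ofNat, lucasZ_ofNat]
    rfl
  · obtain ⟨m, rfl⟩ : ∃ m : ℕ, k = -(m : ℤ) - 1 := ⟨(-k - 1).toNat, by omega⟩
    rcases Nat.eq_zero_or_pos m with h0 | h0
    · subst h0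
      rw [show (-((0:ℕ):ℤ) - 1 + 2) = ((1:ℕ):ℤ) by ring, show (-((0:ℕ):ℤ) - 1 + 1) = -((0:ℕ):ℤ) by ring,
        show (-((0:ℕ):ℤ) - 1) = -((1:ℕ):ℤ) by ring, lucasZ_ofNat, lucasZ_neg_ofNat, lucasZ_neg_ofNat]
      norm_num [lucasNat]
    · obtain ⟨p, rfl⟩ : ∃ p : ℕ, m = p + 1 := ⟨m - 1, by omega⟩
      rw [show (-(((p+1:ℕ)):ℤ) - 1 + 2) = -((p:ℕ):ℤ) by push_cast; ring,
        show (-(((p+1:ℕ)):ℤ) - 1 + 1) = -(((p+1:ℕ)):ℤ) by push_cast; ring,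
        show (-(((p+1:ℕ)):ℤ) - 1) = -(((p+2:ℕ)):ℤ) by push_cast; ring,
        lucasZ_neg_ofNat, lucasZ_neg_ofNat, lucasZ_neg_ofNat, show lucasNat (p+2) = lucasNat (p+1) + lucasNat p from rfl]
      push_cast; ring

lemma fibZ_neg_one : fibZ (-1) = 1 := by norm_num [fibZ]

lemma fibZ_shift (s : ℤ) : ∀ m : ℤ, fibZ (m + s) = fibZ s * fibZ (m + 1) + fibZ (s - 1) * fibZ m := by
  induction s using Int.induction_on with
  | zero =>
    intro m
    rw [show (0:ℤ) - 1 = -1 by ring, fibZ_neg_one, add_zero, show fibZ 0 = 0 from rfl]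
    ring
  | succ k ih =>
    intro m
    have h1 := ih (m + 1)
    have h2 := fibZ_rec m
    have h3 := fibZ_rec ((k:ℤ) - 1)
    rw [show (m + 1 + (k:ℤ)) = m + (k + 1) by ring, show m + 1 + 1 = m + 2 by ring] at h1
    rw [show ((k:ℤ) - 1 + 2) = k + 1 by ring, show ((k:ℤ) - 1 + 1) = (k:ℤ) by ring] at h3
    rw [show ((k:ℤ) + 1 - 1) = (k:ℤ) by ring]
    linear_combination h1 + fibZ (k:ℤ) * h2 - fibZ (m+1) * h3
  | pred k ih =>
    intro m
    have h1 := ih (m - 1)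
    have h2 := fibZ_rec (m - 1)
    have h3 := fibZ_rec (-(k:ℤ) - 2)
    rw [show (m - 1 + -(k:ℤ)) = m + (-k - 1) by ring, show m - 1 + 1 = m by ring] at h1
    rw [show (-(k:ℤ) - 2 + 2) = -(k:ℤ) by ring, show (-(k:ℤ) - 2 + 1) = -(k:ℤ) - 1 by ring] at h3
    rw [show m - 1 + 2 = m + 1 by ring, show m - 1 + 1 = m by ring] at h2
    rw [show (-(k:ℤ) - 1 - 1) = -(k:ℤ) - 2 by ring]
    linear_combination h1 + fibZ m * h3 - fibZ (-(k:ℤ)-1) * h2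

lemma fibZ_neg_even {k : ℤ} (hk : Even k) : fibZ (-k) = -fibZ k := by
  rcases le_or_gt 0 k with h | h
  · obtain ⟨n, rfl⟩ := Int.eq_ofNat_of_zero_le h
    have hn : Even n := Int.even_coe_nat n |>.mp hk
    rw [fibZ_neg_ofNat, fibZ_ofNat, (hn.add_one).neg_one_pow]
    ring
  · obtain ⟨n, rfl⟩ : ∃ n : ℕ, k = -(n : ℤ) := ⟨(-k).toNat, by omega⟩
    have hn : Even n := by
      have : Even (-(n:ℤ)) := hk
      simpa [Int.even_coe_nat] using this.neg
    rw [neg_neg, fibZ_neg_ofNat, fibZ_ofNat, (hn.add_one).neg_one_pow]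
    ring

lemma fibZ_neg_odd {k : ℤ} (hk : Odd k) : fibZ (-k) = fibZ k := by
  rcases le_or_gt 0 k with h | h
  · obtain ⟨n, rfl⟩ := Int.eq_ofNat_of_zero_le h
    have hn : Odd n := Int.odd_coe_nat n |>.mp hk
    rw [fibZ_neg_ofNat, fibZ_ofNat, (hn.add_one).neg_one_pow]
    ring
  · obtain ⟨n, rfl⟩ : ∃ n : ℕ, k = -(n : ℤ) := ⟨(-k).toNat, by omega⟩
    have hn : Odd n := by
      have : Odd ((n:ℤ)) := by simpa using hk.neg
      exact_mod_cast this
    rw [neg_neg, fibZ_neg_ofNat, fibZ_ofNat, (hn.add_one).neg_one_pow]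
    ring

lemma lucasNat_fib (n : ℕ) : lucasNat n = 2 * (Nat.fib (n+1) : ℤ) - Nat.fib n := by
  induction n using Nat.twoStepInduction with
  | zero => norm_num [lucasNat]
  | one => norm_num [lucasNat]
  | more n ih1 ih2 =>
    have e1 : (Nat.fib (n+1+2) : ℤ) = Nat.fib (n+1+1) + Nat.fib (n+1) := by
      rw [Nat.fib_add_two]; push_cast; ring
    have e2 : (Nat.fib (n+1+1) : ℤ) = Nat.fib (n+1) + Nat.fib n := by
      rw [show n+1+1 = n+2 from rfl, Nat.fib_add_two]; push_cast; ring
    rw [show lucasNat (n+2) = lucasNat (n+1) + lucasNat n from rfl, ih1, ih2,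
      show n+2+1 = n+1+2 from rfl, e1, e2]
    ring

lemma lucasZ_fib (k : ℤ) : lucasZ k = 2 * fibZ (k + 1) - fibZ k := by
  rcases le_or_gt 0 k with h | h
  · obtain ⟨n, rfl⟩ := Int.eq_ofNat_of_zero_le h
    rw [show ((n:ℤ) + 1) = ((n+1 : ℕ) : ℤ) by push_cast; ring, lucasZ_ofNat, fibZ_ofNat, fibZ_ofNat,
      lucasNat_fib]
  · obtain ⟨p, rfl⟩ : ∃ p : ℕ, k = -((p+1 : ℕ) : ℤ) := ⟨(-k - 1).toNat, by omega⟩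
    rw [show (-((p+1 : ℕ) : ℤ) + 1) = -((p:ℕ) : ℤ) by push_cast; ring,
      lucasZ_neg_ofNat, fibZ_neg_ofNat, fibZ_neg_ofNat, lucasNat_fib,
      show (p+1)+1 = p+2 from rfl, Nat.fib_add_two]
    push_cast
    ring

lemma lucasZ_fib' (k : ℤ) : lucasZ k = fibZ (k - 1) + fibZ (k + 1) := by
  have h := fibZ_rec (k - 1)
  rw [show k - 1 + 2 = k + 1 by ring, show k - 1 + 1 = k by ring] at h
  rw [lucasZ_fib]
  linarith

lemma fib_key {s : ℤ} (hs : Even s) (m : ℤ) :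
    fibZ (m + s) + fibZ (m - s) = lucasZ s * fibZ m := by
  have h1 := fibZ_shift s m
  have h2 := fibZ_shift (-s) m
  rw [show m + -s = m - s by ring, show -s - 1 = -(s + 1) by ring,
    fibZ_neg_even hs, fibZ_neg_odd hs.add_one] at h2
  rw [lucasZ_fib']
  have h3 := fibZ_rec (s - 1)
  rw [show s - 1 + 2 = s + 1 by ring, show s - 1 + 1 = s by ring] at h3
  linear_combination h1 + h2 + fibZ m * h3 - fibZ m * h3

lemma lucas_key {s : ℤ} (hs : Even s) (m : ℤ) :
    lucasZ (m + s) + lucasZ (m - s) = lucasZ s * lucasZ m := by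
  have h1 := fib_key hs (m - 1)
  have h2 := fib_key hs (m + 1)
  rw [show m - 1 + s = (m + s) - 1 by ring, show m - 1 - s = (m - s) - 1 by ring] at h1
  rw [show m + 1 + s = (m + s) + 1 by ring, show m + 1 - s = (m - s) + 1 by ring] at h2
  rw [lucasZ_fib' (m + s), lucasZ_fib' (m - s), lucasZ_fib' m]
  linear_combination h1 + h2

lemma sumA (L : ℚ) (G : ℕ → ℚ) (hG : ∀ k, G (k+2) = L * G (k+1) - G k) :
    ∀ m : ℕ, ∑ j ∈ range (m+1), (m.choose j : ℚ) * (-1)^j * L^(m-j) * G (m+j) = G 0 := by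
  intro m
  induction m with
  | zero => simp
  | succ m ih =>
    have hV : ∑ i ∈ range (m+1), (m.choose (i+1) : ℚ) * (-1)^(i+1) * L^(m-i) * G (m+1+(i+1))
        = (∑ j ∈ range (m+1), (m.choose j : ℚ) * (-1)^j * L^(m+1-j) * G (m+1+j))
          - L^(m+1) * G (m+1) := by
      rw [Finset.sum_range_succ' (fun j => (m.choose j : ℚ) * (-1)^j * L^(m+1-j) * G (m+1+j)) m]
      rw [Finset.sum_range_succ]
      simp [Nat.choose_succ_self, Nat.succ_sub_succ]
    have hP : ∑ i ∈ range (m+1), (m.choose i : ℚ) * (-1)^(i+1) * L^(m-i) * G (m+1+(i+1))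
        = (∑ j ∈ range (m+1), (m.choose j : ℚ) * (-1)^j * L^(m-j) * G (m+j))
          - ∑ j ∈ range (m+1), (m.choose j : ℚ) * (-1)^j * L^(m+1-j) * G (m+1+j) := by
      rw [← Finset.sum_sub_distrib]
      apply Finset.sum_congr rfl
      intro i hi
      have hi' : i ≤ m := by
        simp only [Finset.mem_range] at hi; omega
      have hg := hG (m + i)
      rw [show m+1+(i+1) = m+i+2 by omega, hg, show m+i+1 = m+1+i by omega,
        show m+1-i = (m-i)+1 by omega, pow_succ']
      ring
    rw [Finset.sum_range_succ' (fun j => ((m+1).choose j : ℚ) * (-1)^j * L^(m+1-j) * G (m+1+j)) (m+1)]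
    have hsplit : ∑ i ∈ range (m+1), ((m+1).choose (i+1) : ℚ) * (-1)^(i+1) * L^(m+1-(i+1)) * G (m+1+(i+1))
        = (∑ i ∈ range (m+1), (m.choose i : ℚ) * (-1)^(i+1) * L^(m-i) * G (m+1+(i+1)))
          + ∑ i ∈ range (m+1), (m.choose (i+1) : ℚ) * (-1)^(i+1) * L^(m-i) * G (m+1+(i+1)) := by
      rw [← Finset.sum_add_distrib]
      apply Finset.sum_congr rfl
      intro i hi
      rw [Nat.choose_succ_succ, Nat.succ_sub_succ]
      push_cast
      ring
    rw [hsplit, hP, hV, ← ih]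
    simp

lemma sumB (L : ℚ) (G : ℕ → ℚ) (hG : ∀ k, G (k+2) = L * G (k+1) - G k) (n : ℕ) :
    ∑ k ∈ range (n+1), (n.choose k : ℚ) * (-1)^k * L^(n-k) * G (n+k+2) / (k+1)
      = (L^(n+1) * G (n+1) - G 0) / (n+1) := by
  have hA := sumA L G hG (n+1)
  rw [Finset.sum_range_succ' (fun j => ((n+1).choose j : ℚ) * (-1)^j * L^(n+1-j) * G (n+1+j)) (n+1)] at hA
  have hne : ((n : ℚ) + 1) ≠ 0 := by positivity
  rw [eq_div_iff hne, Finset.sum_mul]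
  have hterm : ∀ k ∈ range (n+1),
      (n.choose k : ℚ) * (-1)^k * L^(n-k) * G (n+k+2) / (k+1) * ((n:ℚ)+1)
      = -(((n+1).choose (k+1) : ℚ) * (-1)^(k+1) * L^(n+1-(k+1)) * G (n+1+(k+1))) := by
    intro k hk
    have hchoose : ((n:ℚ)+1) * (n.choose k) = ((n+1).choose (k+1) : ℚ) * ((k:ℚ)+1) := by
      exact_mod_cast Nat.add_one_mul_choose_eq n k
    have hk1 : ((k:ℚ)+1) ≠ 0 := by positivity
    rw [Nat.succ_sub_succ, show n+1+(k+1) = n+k+2 by omega, div_mul_eq_mul_div, div_eq_iff hk1]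
    linear_combination ((-1:ℚ)^k * L^(n-k) * G (n+k+2)) * hchoose
  rw [Finset.sum_congr rfl hterm]
  simp only [Finset.sum_neg_distrib]
  simp at hA ⊢
  linarith [hA]

theorem stmt_13 (s t : ℤ) (hs : Even s) (n : ℕ) :
    (∑ k ∈ range (n + 1),
      (n.choose k : ℚ) * (-1) ^ k * (lucasZ s : ℚ) ^ (n - k) * (fibZ (s * ((n : ℤ) + k + 2) + t) : ℚ) / (k + 1) =
      ((lucasZ s : ℚ) ^ (n + 1) * (fibZ (s * (n + 1) + t) : ℚ) - fibZ t) / (n + 1)) ∧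
    (∑ k ∈ range (n + 1),
      (n.choose k : ℚ) * (-1) ^ k * (lucasZ s : ℚ) ^ (n - k) * (lucasZ (s * ((n : ℤ) + k + 2) + t) : ℚ) / (k + 1) =
      ((lucasZ s : ℚ) ^ (n + 1) * (lucasZ (s * (n + 1) + t) : ℚ) - lucasZ t) / (n + 1)) := by
  constructor
  · have hG : ∀ k : ℕ, ((fun k : ℕ => (fibZ (s * k + t) : ℚ)) (k+2))
        = (lucasZ s : ℚ) * ((fun k : ℕ => (fibZ (s * k + t) : ℚ)) (k+1))
          - (fun k : ℕ => (fibZ (s * k + t) : ℚ)) k := by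
      intro k
      have h := fib_key hs (s * ((k:ℤ)+1) + t)
      rw [show s * ((k:ℤ)+1) + t + s = s * ((k:ℤ)+2) + t by ring,
        show s * ((k:ℤ)+1) + t - s = s * (k:ℤ) + t by ring] at h
      have h' : fibZ (s * ((k:ℤ)+2) + t) = lucasZ s * fibZ (s * ((k:ℤ)+1) + t) - fibZ (s * (k:ℤ) + t) := by
        linarith [h]
      simp only
      push_cast
      exact_mod_cast h'
    have main := sumB (lucasZ s : ℚ) (fun k : ℕ => (fibZ (s * k + t) : ℚ)) hG n
    push_cast at main
    rw [show s * (0:ℤ) + t = t by ring] at main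
    convert main using 2
  · have hG : ∀ k : ℕ, ((fun k : ℕ => (lucasZ (s * k + t) : ℚ)) (k+2))
        = (lucasZ s : ℚ) * ((fun k : ℕ => (lucasZ (s * k + t) : ℚ)) (k+1))
          - (fun k : ℕ => (lucasZ (s * k + t) : ℚ)) k := by
      intro k
      have h := lucas_key hs (s * ((k:ℤ)+1) + t)
      rw [show s * ((k:ℤ)+1) + t + s = s * ((k:ℤ)+2) + t by ring,
        show s * ((k:ℤ)+1) + t - s = s * (k:ℤ) + t by ring] at h
      have h' : lucasZ (s * ((k:ℤ)+2) + t) = lucasZ s * lucasZ (s * ((k:ℤ)+1) + t) - lucasZ (s * (k:ℤ) + t) := by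
        linarith [h]
      simp only
      push_cast
      exact_mod_cast h'
    have main := sumB (lucasZ s : ℚ) (fun k : ℕ => (lucasZ (s * k + t) : ℚ)) hG n
    push_cast at main
    rw [show s * (0:ℤ) + t = t by ring] at main
    convert main using 2
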